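/- Let Q be a finite quiver, θ ∈ ℤ^k, and let M be a θ-semistable representation. Then M has a Jordan–Hölder filtration 0 = M_0 ⊂ M_1 ⊂ … ⊂ M_r = M by subrepresentations such that each quotient M_t/M_{t−1} is θ-stable with θ(M_t) = 0 for all t. -/

import Mathlib

open Quiver

structure QRep (V : Type) [Quiver.{1} V] where
  carrier : V → Type
  [acg : ∀ i, AddCommGroup (carrier i)]
  [mod : ∀ i, Module ℂ (carrier i)]
  map : ∀ {i j : V}, (i ⟶ j) → (carrier i →ₗ[ℂ] carrier j)

attribute [instance] QRep.acg QRep.mod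

variable {V : Type} [Quiver.{1} V]

structure SubRep (M : QRep V) where
  N : ∀ i, Submodule ℂ (M.carrier i)
  compat : ∀ {i j : V} (a : i ⟶ j), ∀ x ∈ N i, M.map a x ∈ N j

noncomputable def QRep.θnum [Fintype V] (θ : V → ℤ) (M : QRep V) : ℤ :=
  ∑ i, θ i * (Module.finrank ℂ (M.carrier i) : ℤ)

noncomputable def SubRep.θnum [Fintype V] {M : QRep V} (θ : V → ℤ) (N : SubRep M) : ℤ :=
  ∑ i, θ i * (Module.finrank ℂ ↥(N.N i) : ℤ)

def QRep.Semistable [Fintype V] (θ : V → ℤ) (M : QRep V) : Prop :=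
  M.θnum θ = 0 ∧ ∀ N : SubRep M, 0 ≤ N.θnum θ

def QRep.Stable [Fintype V] (θ : V → ℤ) (M : QRep V) : Prop :=
  M.Semistable θ ∧ (∃ i, Nontrivial (M.carrier i)) ∧
    ∀ N : SubRep M, N.θnum θ = 0 → (∀ i, N.N i = ⊥) ∨ (∀ i, N.N i = ⊤)

open Module in
private lemma subrep_chain [Fintype V] (θ : V → ℤ) (M : QRep V)
    (hMfd : ∀ i, FiniteDimensional ℂ (M.carrier i)) :
    ∀ k (T : SubRep M), (∑ i, Module.finrank ℂ ↥(T.N i)) ≤ k → T.θnum θ = 0 →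
    ∃ (r : ℕ) (F : Fin (r + 1) → SubRep M),
      (∀ i, (F 0).N i = ⊥) ∧
      (∀ i, (F (Fin.last r)).N i = T.N i) ∧
      (∀ (t : Fin r) (i : V), (F t.castSucc).N i ≤ (F t.succ).N i) ∧
      (∀ t : Fin (r + 1), (F t).θnum θ = 0) ∧
      (∀ t : Fin r,
        (∃ i, (F t.castSucc).N i ≠ (F t.succ).N i) ∧
        ∀ N : SubRep M, (∀ i, (F t.castSucc).N i ≤ N.N i ∧ N.N i ≤ (F t.succ).N i) →
          N.θnum θ = 0 →
          (∀ i, N.N i = (F t.castSucc).N i) ∨ (∀ i, N.N i = (F t.succ).N i)) := by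
  classical
  haveI : ∀ i, FiniteDimensional ℂ (M.carrier i) := hMfd
  intro k
  induction k using Nat.strong_induction_on with
  | _ k ih =>
    intro T hTk hTθ
    by_cases hbot : ∀ i, T.N i = ⊥
    · refine ⟨0, fun _ => T, fun i => hbot i, fun i => rfl, fun t => t.elim0,
        fun _ => hTθ, fun t => t.elim0⟩
    · push_neg at hbot
      -- the bottom subrepresentation
      set Bot : SubRep M := ⟨fun _ => ⊥, by
        intro i j a x hx
        simp only [Submodule.mem_bot] at hx ⊢
        rw [hx, map_zero]⟩ with hBot
      set P : ℕ → Prop := fun d => ∃ N : SubRep M, (∀ i, N.N i ≤ T.N i) ∧ N.θnum θ = 0 ∧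
        (∃ i, N.N i ≠ T.N i) ∧ (∑ i, Module.finrank ℂ ↥(N.N i)) = d with hP
      set b : ℕ := ∑ i, Module.finrank ℂ ↥(T.N i) with hb
      have hP0 : P 0 := by
        refine ⟨Bot, fun i => bot_le, ?_, ?_, ?_⟩
        · simp [SubRep.θnum, hBot, Bot]
        · obtain ⟨i0, hi0⟩ := hbot
          exact ⟨i0, fun h => hi0 h.symm⟩
        · simp [hBot]
      set m : ℕ := Nat.findGreatest P b with hm
      have hPm : P m := Nat.findGreatest_spec (Nat.zero_le b) hP0
      obtain ⟨N, hNle, hNθ, hNne, hNd⟩ := hPm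
      have hNlt : (∑ i, Module.finrank ℂ ↥(N.N i)) < ∑ i, Module.finrank ℂ ↥(T.N i) := by
        obtain ⟨i0, hi0⟩ := hNne
        exact Finset.sum_lt_sum (fun i _ => Submodule.finrank_mono (hNle i))
          ⟨i0, Finset.mem_univ _,
            Submodule.finrank_lt_finrank_of_lt (lt_of_le_of_ne (hNle i0) hi0)⟩
      obtain ⟨r, F', h0, hlast, hmono, hθ, hstep⟩ :=
        ih (∑ i, Module.finrank ℂ ↥(N.N i)) (lt_of_lt_of_le hNlt hTk) N le_rfl hNθ
      refine ⟨r + 1, Fin.snoc F' T, ?_, ?_, ?_, ?_, ?_⟩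
      · intro i
        have : ((0 : Fin (r + 2))) = (0 : Fin (r + 1)).castSucc := by
          simp [Fin.ext_iff]
        rw [this, Fin.snoc_castSucc]
        exact h0 i
      · intro i
        rw [Fin.snoc_last]
      · intro t
        refine Fin.lastCases ?_ ?_ t
        · intro i
          rw [Fin.succ_last, Fin.snoc_castSucc, Fin.snoc_last]
          rw [hlast i]
          exact hNle i
        · intro s i
          rw [Fin.succ_castSucc, Fin.snoc_castSucc, Fin.snoc_castSucc]
          exact hmono s i
      · intro t
        refine Fin.lastCases ?_ ?_ t
        · rw [Fin.snoc_last]; exact hTθ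
        · intro s
          rw [Fin.snoc_castSucc]; exact hθ s
      · intro t
        refine Fin.lastCases ?_ ?_ t
        · rw [Fin.succ_last, Fin.snoc_castSucc, Fin.snoc_last]
          constructor
          · obtain ⟨i0, hi0⟩ := hNne
            exact ⟨i0, by rw [hlast i0]; exact hi0⟩
          · intro Q hQb hQθ
            by_cases hQT : ∀ i, Q.N i = T.N i
            · exact Or.inr hQT
            · push_neg at hQT
              left
              have hNQ : ∀ i, N.N i ≤ Q.N i := by
                intro i
                have := (hQb i).1
                rwa [hlast i] at this
              have hQle : ∀ i, Q.N i ≤ T.N i := fun i => (hQb i).2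
              have hQd : (∑ i, Module.finrank ℂ ↥(Q.N i)) ≤ m := by
                by_contra hcon
                push_neg at hcon
                have hbd : (∑ i, Module.finrank ℂ ↥(Q.N i)) ≤ b :=
                  Finset.sum_le_sum (fun i _ => Submodule.finrank_mono (hQle i))
                exact Nat.findGreatest_is_greatest hcon hbd ⟨Q, hQle, hQθ, hQT, rfl⟩
              rw [← hNd] at hQd
              have hsum : (∑ i, Module.finrank ℂ ↥(N.N i)) =
                  ∑ i, Module.finrank ℂ ↥(Q.N i) :=
                le_antisymm (Finset.sum_le_sum (fun i _ => Submodule.finrank_mono (hNQ i))) hQd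
              have hpt := (Finset.sum_eq_sum_iff_of_le
                (fun i _ => Submodule.finrank_mono (hNQ i))).mp hsum
              intro i
              rw [hlast i]
              exact (Submodule.eq_of_le_of_finrank_le (hNQ i)
                (le_of_eq (hpt i (Finset.mem_univ i)).symm)).symm
        · intro s
          rw [Fin.succ_castSucc, Fin.snoc_castSucc, Fin.snoc_castSucc]
          exact hstep s

/-- every θ-semistable representation M admits a Jordan–Hölder filtration
0 = M₀ ⊂ M₁ ⊂ … ⊂ M_r = M by subrepresentations with θ(M_t) = 0 for all t and all
successive quotients M_t/M_{t-1} θ-stable (expressed via the lattice of subrepresentations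
between M_{t-1} and M_t: the quotient is nonzero, intermediate subrepresentations have
nonnegative θ-value, and θ-value 0 occurs only at the two endpoints). -/
theorem semistable_has_jordan_holder_filtration [Fintype V] (θ : V → ℤ) (M : QRep V)
    (hMfd : ∀ i, FiniteDimensional ℂ (M.carrier i))
    (hM : M.Semistable θ) :
    ∃ (r : ℕ) (F : Fin (r + 1) → SubRep M),
      (∀ i, (F 0).N i = ⊥) ∧
      (∀ i, (F (Fin.last r)).N i = ⊤) ∧
      (∀ (t : Fin r) (i : V), (F t.castSucc).N i ≤ (F t.succ).N i) ∧
      (∀ t : Fin (r + 1), (F t).θnum θ = 0) ∧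
      (∀ t : Fin r,
        (∃ i, (F t.castSucc).N i ≠ (F t.succ).N i) ∧
        ∀ N : SubRep M, (∀ i, (F t.castSucc).N i ≤ N.N i ∧ N.N i ≤ (F t.succ).N i) →
          0 ≤ N.θnum θ ∧
            (N.θnum θ = 0 →
              (∀ i, N.N i = (F t.castSucc).N i) ∨ (∀ i, N.N i = (F t.succ).N i))) := by
  classical
  set Top : SubRep M := ⟨fun _ => ⊤, fun a x _ => trivial⟩ with hTop
  have hTopθ : Top.θnum θ = 0 := by
    have : Top.θnum θ = M.θnum θ := by
      unfold SubRep.θnum QRep.θnum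
      refine Finset.sum_congr rfl (fun i _ => ?_)
      rw [hTop]
      rw [finrank_top]
    rw [this]; exact hM.1
  obtain ⟨r, F, h0, hlast, hmono, hθ, hstep⟩ :=
    subrep_chain θ M hMfd (∑ i, Module.finrank ℂ ↥(Top.N i)) Top le_rfl hTopθ
  refine ⟨r, F, h0, fun i => hlast i, hmono, hθ, fun t => ⟨(hstep t).1, fun N hN => ?_⟩⟩
  exact ⟨hM.2 N, fun hNθ => (hstep t).2 N hN hNθ⟩
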